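/- Let k be a field, c ∈ k. The k-subalgebra of k[z] generated by the two elements z² − c and z³ − cz equals the set of polynomials f ∈ k[z] that are congruent to a constant modulo the ideal (z² − c); that is, Algebra.adjoin k {z² − c, z³ − cz} = k·1 + (z² − c)·k[z] as k-submodules of k[z]. -/

import Mathlib

open Polynomial

/-- Let `k` be a field, `c ∈ k`. The `k`-subalgebra of `k[z]` generated by
`z² − c` and `z³ − cz` equals, as a `k`-submodule of `k[z]`, the sum of the span of the
constants and the ideal generated by `z² − c`. -/
theorem adjoin_eq_constants_sup_ideal (k : Type*) [Field k] (c : k) :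
    Subalgebra.toSubmodule
        (Algebra.adjoin k ({X ^ 2 - C c, X ^ 3 - C c * X} : Set k[X]))
      = Submodule.span k ({1} : Set k[X]) ⊔
        Submodule.restrictScalars k (Ideal.span ({X ^ 2 - C c} : Set k[X])) := by
  set p : k[X] := X ^ 2 - C c with hp
  set A := Algebra.adjoin k ({X ^ 2 - C c, X ^ 3 - C c * X} : Set k[X]) with hA
  set R := Submodule.span k ({1} : Set k[X]) ⊔
      Submodule.restrictScalars k (Ideal.span ({X ^ 2 - C c} : Set k[X])) with hR
  have hpA : p ∈ A := Algebra.subset_adjoin (by simp [hp])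
  have hxpA : X * p ∈ A := by
    have h : X * p = X ^ 3 - C c * X := by rw [hp]; ring
    rw [h]; exact Algebra.subset_adjoin (by simp)
  have key : ∀ n : ℕ, X ^ n * p ∈ A := by
    intro n
    induction n using Nat.twoStepInduction with
    | zero => simpa using hpA
    | one => simpa using hxpA
    | more n ih _ =>
      have h : X ^ (n + 2) * p = p * (X ^ n * p) + C c * (X ^ n * p) := by
        rw [hp]; ring
      rw [h]
      refine add_mem (mul_mem hpA ih) ?_
      rw [← smul_eq_C_mul]
      exact A.smul_mem ih c
  have hmul : ∀ f : k[X], f * p ∈ A := by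
    intro f
    induction f using Polynomial.induction_on' with
    | add f g hf hg => rw [add_mul]; exact add_mem hf hg
    | monomial n a =>
      rw [← C_mul_X_pow_eq_monomial, mul_assoc, ← smul_eq_C_mul]
      exact A.smul_mem (key n) a
  have hmem : ∀ x : k[X], x ∈ R ↔ ∃ a : k, ∃ q : k[X], x = C a + q * p := by
    intro x
    constructor
    · intro hx
      rw [hR, Submodule.mem_sup] at hx
      obtain ⟨y, hy, z, hz, rfl⟩ := hx
      rw [Submodule.mem_span_singleton] at hy
      obtain ⟨a, rfl⟩ := hy
      rw [Submodule.restrictScalars_mem, Ideal.mem_span_singleton'] at hz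
      obtain ⟨q, rfl⟩ := hz
      exact ⟨a, q, by rw [smul_eq_C_mul, mul_one]⟩
    · rintro ⟨a, q, rfl⟩
      rw [hR, Submodule.mem_sup]
      refine ⟨C a, ?_, q * p, ?_, rfl⟩
      · rw [Submodule.mem_span_singleton]
        exact ⟨a, by rw [smul_eq_C_mul, mul_one]⟩
      · rw [Submodule.restrictScalars_mem, Ideal.mem_span_singleton']
        exact ⟨q, rfl⟩
  apply le_antisymm
  · intro x hx
    have hx' : x ∈ A := hx
    clear hx
    show x ∈ R
    induction hx' using Algebra.adjoin_induction with
    | mem y hy =>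
      rcases hy with hy | hy
      · rw [hmem]
        exact ⟨0, 1, by simp [hy, hp]⟩
      · simp only [Set.mem_singleton_iff] at hy
        rw [hmem]
        exact ⟨0, X, by simp [hy, hp]; ring⟩
    | algebraMap r =>
      rw [hmem]
      exact ⟨r, 0, by simp [algebraMap_eq]⟩
    | add y z hy hz hy' hz' =>
      exact R.add_mem hy' hz'
    | mul y z hy hz hy' hz' =>
      rw [hmem] at *
      obtain ⟨a, q, rfl⟩ := hy'
      obtain ⟨b, r, rfl⟩ := hz'
      exact ⟨a * b, C a * r + C b * q + q * r * p, by rw [C_mul]; ring⟩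
  · rw [hR, sup_le_iff]
    constructor
    · rw [Submodule.span_le]
      intro x hx
      simp only [Set.mem_singleton_iff] at hx
      subst hx
      exact A.one_mem
    · intro x hx
      rw [Submodule.restrictScalars_mem, Ideal.mem_span_singleton'] at hx
      obtain ⟨q, rfl⟩ := hx
      exact hmul q
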